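/- Let m, k, r be integers with 2 ≤ m < r and k > 1, and suppose (r/m)^((k−1)/2) · (e/r)^(1/k) ≥ 2e, where e is Euler's number. Then for every positive integer n with n < (√m/(√e · r)) · k · (r/m)^(k/2), there exists an (r;m)-coloring of the complete graph on n vertices that contains no monochromatic k-clique in any color i ∈ {1,…,r}. (Equivalently, the extended Ramsey number satisfies R^m(k;r) ≥ (√m/(√e · r)) · k · (r/m)^(k/2).) -/

import Mathlib

open Finset

section counting

variable {D γ : Type*} [Fintype D] [DecidableEq D] [Fintype γ]

lemma card_constrained (S : Finset D) (P : γ → Prop) [DecidablePred P] :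
    Fintype.card {f : D → γ // ∀ e ∈ S, P (f e)}
      = (Fintype.card {b : γ // P b}) ^ S.card * (Fintype.card γ) ^ (Sᶜ.card) := by
  have E : {f : D → γ // ∀ e ∈ S, P (f e)} ≃ (∀ _e : D, {b : γ // _e ∈ S → P b}) :=
    { toFun := fun f e => ⟨f.1 e, fun h => f.2 e h⟩
      invFun := fun g => ⟨fun e => (g e).1, fun e h => (g e).2 h⟩
      left_inv := fun f => rfl
      right_inv := fun g => rfl }
  rw [Fintype.card_congr E, Fintype.card_pi]
  have hcard : ∀ e : D, Fintype.card {b : γ // e ∈ S → P b}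
      = if e ∈ S then Fintype.card {b : γ // P b} else Fintype.card γ := by
    intro e
    by_cases h : e ∈ S
    · simp only [h, if_true]
      exact Fintype.card_congr (Equiv.subtypeEquivRight (fun b => by simp [h]))
    · simp only [h, if_false]
      rw [Fintype.card_subtype]
      simp [h]
  simp only [hcard]
  have h1 : Finset.univ.filter (fun e : D => e ∈ S) = S := by ext e; simp
  have h2 : Finset.univ.filter (fun e : D => ¬ e ∈ S) = Sᶜ := by ext e; simp
  rw [Finset.prod_ite, h1, h2, Finset.prod_const, Finset.prod_const]

lemma card_sym2_nondiag_ge {α : Type*} [DecidableEq α] (W : Finset α) :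
    Nat.choose W.card 2 ≤ (W.sym2.filter (fun e => ¬ e.IsDiag)).card := by
  have hsub : W.sym2.filter (fun e => e.IsDiag) ⊆ W.image Sym2.diag := by
    intro e he
    rw [Finset.mem_filter] at he
    obtain ⟨he1, he2⟩ := he
    induction e using Sym2.ind with
    | _ a b =>
      rw [Sym2.mk_isDiag_iff] at he2
      subst he2
      rw [Finset.mk_mem_sym2_iff] at he1
      exact Finset.mem_image.2 ⟨a, he1.1, rfl⟩
  have h1 : (W.sym2.filter (fun e => e.IsDiag)).card ≤ W.card :=
    le_trans (Finset.card_le_card hsub) (Finset.card_image_le)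
  have h2 : (W.sym2.filter (fun e => e.IsDiag)).card
      + (W.sym2.filter (fun e => ¬ e.IsDiag)).card = W.sym2.card :=
    Finset.card_filter_add_card_filter_not (p := fun e : Sym2 α => e.IsDiag)
  have h3 : W.sym2.card = Nat.choose (W.card + 1) 2 := Finset.card_sym2 W
  have h4 : Nat.choose (W.card + 1) 2 = W.card + Nat.choose W.card 2 := by
    rw [Nat.choose_succ_succ, Nat.choose_one_right]
  omega

lemma card_subsets_with_mem (r m : ℕ) (hm : 1 ≤ m) (i : Fin r) :
    Fintype.card {s : Finset (Fin r) // s.card = m ∧ i ∈ s} = Nat.choose (r-1) (m-1) := by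
  classical
  rw [Fintype.card_subtype]
  have key : Finset.univ.filter (fun s : Finset (Fin r) => s.card = m ∧ i ∈ s)
      = ((Finset.univ.erase i).powersetCard (m-1)).image (insert i) := by
    ext s
    simp only [Finset.mem_filter, Finset.mem_univ, true_and, Finset.mem_image,
      Finset.mem_powersetCard]
    constructor
    · rintro ⟨hcard, hi⟩
      refine ⟨s.erase i, ⟨?_, ?_⟩, Finset.insert_erase hi⟩
      · exact Finset.erase_subset_erase i (Finset.subset_univ s)
      · rw [Finset.card_erase_of_mem hi, hcard]
    · rintro ⟨t, ⟨hts, htc⟩, rfl⟩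
      have hit : i ∉ t := fun h => (Finset.mem_erase.1 (hts h)).1 rfl
      rw [Finset.card_insert_of_notMem hit, htc]
      exact ⟨by omega, Finset.mem_insert_self i t⟩
  rw [key, Finset.card_image_of_injOn, Finset.card_powersetCard,
    Finset.card_erase_of_mem (Finset.mem_univ i), Finset.card_univ, Fintype.card_fin]
  intro t1 h1 t2 h2 he
  rw [Finset.mem_coe, Finset.mem_powersetCard] at h1 h2
  have hi1 : i ∉ t1 := fun h => (Finset.mem_erase.1 (h1.1 h)).1 rfl
  have hi2 : i ∉ t2 := fun h => (Finset.mem_erase.1 (h2.1 h)).1 rfl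
  rw [← Finset.erase_insert hi1, ← Finset.erase_insert hi2, he]

lemma contain_mul (r m : ℕ) (hm : 1 ≤ m) (i : Fin r) :
    Nat.choose (r-1) (m-1) * r = m * Nat.choose r m := by
  obtain ⟨r', rfl⟩ : ∃ r', r = r' + 1 := ⟨r - 1, by
    rcases Nat.eq_zero_or_pos r with h | h
    · subst h; exact absurd i.2 (by omega)
    · omega⟩
  obtain ⟨m', rfl⟩ : ∃ m', m = m' + 1 := ⟨m - 1, by omega⟩
  simp only [Nat.add_sub_cancel]
  calc Nat.choose r' m' * (r' + 1) = (r' + 1) * Nat.choose r' m' := mul_comm _ _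
  _ = Nat.choose (r' + 1) (m' + 1) * (m' + 1) := Nat.add_one_mul_choose_eq r' m'
  _ = (m' + 1) * Nat.choose (r' + 1) (m' + 1) := mul_comm _ _

lemma nat_sub_add_sub (a b d : ℕ) (h1 : d ≤ a) (h2 : a ≤ b) : a - d + (b - a) = b - d := by
  omega

end counting

open Real in
lemma pow_le_exp_factorial : ∀ k : ℕ, 1 ≤ k → (k:ℝ)^k ≤ Real.exp ((k:ℝ)-1) * (Nat.factorial k) := by
  intro k hk
  induction k with
  | zero => omega
  | succ k ih =>
    rcases Nat.eq_or_lt_of_le hk with h | h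
    · simp [← h]
    · have hk1 : 1 ≤ k := by omega
      have ihk := ih hk1
      have hkpos : (0:ℝ) < k := by positivity
      have h1 : ((k:ℝ)+1)^k ≤ Real.exp 1 * (k:ℝ)^k := by
        have h2 : ((k:ℝ)+1) ≤ (k:ℝ) * Real.exp (1/k) := by
          have := Real.add_one_le_exp (1/(k:ℝ))
          calc ((k:ℝ)+1) = (k:ℝ) * (1/k + 1) := by field_simp; ring
          _ ≤ (k:ℝ) * Real.exp (1/k) := by nlinarith [Real.add_one_le_exp (1/(k:ℝ))]
        calc ((k:ℝ)+1)^k ≤ ((k:ℝ) * Real.exp (1/k))^k := by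
              apply pow_le_pow_left₀ (by positivity) h2
        _ = (k:ℝ)^k * (Real.exp (1/k))^k := by rw [mul_pow]
        _ = (k:ℝ)^k * Real.exp 1 := by
              rw [← Real.exp_nat_mul]
              congr 1
              field_simp
        _ = Real.exp 1 * (k:ℝ)^k := by ring
      have h3 : ((k:ℝ)+1)^(k+1) ≤ ((k:ℝ)+1) * (Real.exp 1 * (k:ℝ)^k) := by
        rw [pow_succ]
        nlinarith [pow_nonneg hkpos.le k]
      calc ((k+1:ℕ):ℝ)^(k+1) = ((k:ℝ)+1)^(k+1) := by push_cast; ring_nf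
      _ ≤ ((k:ℝ)+1) * (Real.exp 1 * (k:ℝ)^k) := h3
      _ ≤ ((k:ℝ)+1) * (Real.exp 1 * (Real.exp ((k:ℝ)-1) * (Nat.factorial k))) := by
            gcongr
      _ = Real.exp (((k+1:ℕ):ℝ)-1) * (Nat.factorial (k+1)) := by
            rw [show ((k+1:ℕ):ℝ) - 1 = 1 + ((k:ℝ)-1) by push_cast; ring, Real.exp_add]
            push_cast [Nat.factorial_succ]
            ring

lemma key_ineq (m k r n : ℕ) (hm : 2 ≤ m) (hmr : m < r) (hk : 2 ≤ k) (hn : 0 < n)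
    (hlt : (n : ℝ) < Real.sqrt m / (Real.sqrt (Real.exp 1) * r) * k * ((r : ℝ) / m) ^ ((k : ℝ) / 2)) :
    (r : ℝ) * (n.choose k) * ((m : ℝ)/r) ^ (Nat.choose k 2) < 1 := by
  have hr3 : (3:ℝ) ≤ r := by exact_mod_cast (by omega : 3 ≤ r)
  have hrpos : (0:ℝ) < r := by linarith
  have hmpos : (0:ℝ) < m := by exact_mod_cast (by omega : 0 < m)
  have hkpos : (0:ℝ) < k := by exact_mod_cast (by omega : 0 < k)
  have hk2 : (2:ℝ) ≤ k := by exact_mod_cast hk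
  have hnpos : (0:ℝ) < n := by exact_mod_cast hn
  have hrm : (0:ℝ) < (r:ℝ)/m := by positivity
  have hmr' : (0:ℝ) < (m:ℝ)/r := by positivity
  -- bound choose
  have hchoose : (n.choose k : ℝ) ≤ (n:ℝ)^k / (Nat.factorial k) :=
    Nat.choose_le_pow_div k n
  have hfact : ((k:ℝ))^k ≤ Real.exp ((k:ℝ)-1) * (Nat.factorial k) := pow_le_exp_factorial k (by omega)
  have hfactpos : (0:ℝ) < (Nat.factorial k) := by exact_mod_cast k.factorial_pos
  have h1 : (n.choose k : ℝ) * (k:ℝ)^k ≤ (n:ℝ)^k * Real.exp ((k:ℝ)-1) := by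
    calc (n.choose k : ℝ) * (k:ℝ)^k
        ≤ ((n:ℝ)^k / (Nat.factorial k)) * (Real.exp ((k:ℝ)-1) * (Nat.factorial k)) :=
          mul_le_mul hchoose hfact (by positivity) (by positivity)
      _ = (n:ℝ)^k * Real.exp ((k:ℝ)-1) := by field_simp
  have hchoose2 : (n.choose k : ℝ) ≤ (n:ℝ)^k * Real.exp ((k:ℝ)-1) / (k:ℝ)^k := by
    rw [le_div_iff₀ (pow_pos hkpos k)]; exact h1
  -- reduce to the bound with X'
  have hX'pos : (0:ℝ) < (n:ℝ)^k * Real.exp ((k:ℝ)-1) / (k:ℝ)^k := by positivity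
  have hPpos : (0:ℝ) < ((m : ℝ)/r) ^ (Nat.choose k 2) := by positivity
  have main : (r:ℝ) * ((n:ℝ)^k * Real.exp ((k:ℝ)-1) / (k:ℝ)^k) * ((m : ℝ)/r) ^ (Nat.choose k 2) < 1 := by
    -- take logs
    have hXpos : (0:ℝ) < (r:ℝ) * ((n:ℝ)^k * Real.exp ((k:ℝ)-1) / (k:ℝ)^k) * ((m : ℝ)/r) ^ (Nat.choose k 2) := by positivity
    conv_rhs => rw [show (1:ℝ) = Real.exp 0 by simp]
    rw [← Real.log_lt_iff_lt_exp hXpos]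
    have hlog : Real.log ((r:ℝ) * ((n:ℝ)^k * Real.exp ((k:ℝ)-1) / (k:ℝ)^k) * ((m : ℝ)/r) ^ (Nat.choose k 2))
        = Real.log r + ((k:ℝ) * Real.log n + ((k:ℝ)-1) - (k:ℝ) * Real.log k)
          + ((k:ℝ)*((k:ℝ)-1)/2) * (Real.log m - Real.log r) := by
      rw [Real.log_mul (by positivity) (by positivity), Real.log_mul (by positivity) (by positivity),
        Real.log_div (by positivity) (by positivity), Real.log_mul (by positivity) (by positivity),
        Real.log_pow, Real.log_pow, Real.log_pow, Real.log_exp,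
        Real.log_div (by positivity) (by positivity), Nat.cast_choose_two]
      try ring
    rw [hlog]
    -- hypothesis in logs
    have hlogn : Real.log n < Real.log m / 2 - (1/2 + Real.log r) + Real.log k
        + ((k:ℝ)/2) * (Real.log r - Real.log m) := by
      have := Real.log_lt_log hnpos hlt
      rw [Real.log_mul (by positivity) (by positivity), Real.log_mul (by positivity) (by positivity),
        Real.log_div (by positivity) (by positivity), Real.log_mul (by positivity) (by positivity),
        Real.log_sqrt hmpos.le, Real.log_sqrt (Real.exp_pos 1).le, Real.log_exp,
        Real.log_rpow hrm, Real.log_div (by positivity) (by positivity)] at this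
      linarith
    have hlogr : 1 ≤ Real.log r := by
      have h3 : Real.exp 1 < 3 := by
        have := Real.exp_one_lt_d9
        linarith
      have : Real.exp 1 ≤ (r:ℝ) := by linarith
      calc (1:ℝ) = Real.log (Real.exp 1) := by rw [Real.log_exp]
      _ ≤ Real.log r := Real.log_le_log (Real.exp_pos 1) this
    nlinarith [mul_lt_mul_of_pos_left hlogn hkpos]
  calc (r : ℝ) * (n.choose k) * ((m : ℝ)/r) ^ (Nat.choose k 2)
      ≤ (r:ℝ) * ((n:ℝ)^k * Real.exp ((k:ℝ)-1) / (k:ℝ)^k) * ((m : ℝ)/r) ^ (Nat.choose k 2) := by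
        gcongr
    _ < 1 := main

/-- In an edge-coloring of the complete graph on `Fin n` assigning each edge a set of
colors from `Fin r`, `HasMonoClique χ i k` says there is a clique of `k` vertices all
of whose edges have color `i` in their assigned set. -/
def HasMonoClique {n r : ℕ} (χ : Sym2 (Fin n) → Finset (Fin r)) (i : Fin r) (k : ℕ) : Prop :=
  ∃ W : Finset (Fin n), W.card = k ∧ ∀ a ∈ W, ∀ b ∈ W, a ≠ b → i ∈ χ s(a, b)

/-- Probabilistic lower bound for the extended Ramsey number: if `2 ≤ m < r`, `k > 1` and
`(r/m)^((k−1)/2) (e/r)^(1/k) ≥ 2e`, then for every `n < (√m/(√e·r))·k·(r/m)^(k/2)` there is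
an `(r;m)`-coloring of `K_n` with no monochromatic `k`-clique in any color, i.e.
`R^m(k;r) ≥ (√m/(√e·r))·k·(r/m)^(k/2)`. -/
theorem stmt14 (m k r : ℕ) (hm : 2 ≤ m) (hmr : m < r) (hk : 1 < k)
    (hcond : 2 * Real.exp 1 ≤
      ((r : ℝ) / m) ^ (((k : ℝ) - 1) / 2) * (Real.exp 1 / r) ^ ((1 : ℝ) / k)) :
    ∀ n : ℕ, 0 < n →
      (n : ℝ) < Real.sqrt m / (Real.sqrt (Real.exp 1) * r) * k * ((r : ℝ) / m) ^ ((k : ℝ) / 2) →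
      ∃ χ : Sym2 (Fin n) → Finset (Fin r),
        (∀ e, (χ e).card = m) ∧ ∀ i : Fin r, ¬ HasMonoClique χ i k := by
  intro n hn hlt
  classical
  by_cases hnk : n < k
  · -- trivial case: no k-subset of Fin n exists
    obtain ⟨s, -, hs2⟩ := Finset.exists_subset_card_eq (s := (Finset.univ : Finset (Fin r))) (n := m)
      (by simpa using hmr.le)
    refine ⟨fun _ => s, fun _ => hs2, ?_⟩
    rintro i ⟨W, hW, -⟩
    have hWn : W.card ≤ n := le_trans (Finset.card_le_univ W) (by simp)
    omega
  push_neg at hnk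
  set T := Nat.choose r m with hT
  set N := Fintype.card (Sym2 (Fin n)) with hN
  set c := Nat.choose k 2 with hc
  set A := Nat.choose (r-1) (m-1) with hA
  have hTcard : Fintype.card {s : Finset (Fin r) // s.card = m} = T := by
    rw [Fintype.card_finset_len, Fintype.card_fin]
  have hΩcard : Fintype.card (Sym2 (Fin n) → {s : Finset (Fin r) // s.card = m}) = T ^ N := by
    rw [Fintype.card_fun, hTcard]
  have hAcard : ∀ i : Fin r, Fintype.card {s : {s : Finset (Fin r) // s.card = m} // i ∈ s.1} = A := by
    intro i
    have E : {s : {s : Finset (Fin r) // s.card = m} // i ∈ s.1} ≃ {s : Finset (Fin r) // s.card = m ∧ i ∈ s} :=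
      { toFun := fun s => ⟨s.1.1, s.1.2, s.2⟩
        invFun := fun s => ⟨⟨s.1, s.2.1⟩, s.2.2⟩
        left_inv := fun s => rfl
        right_inv := fun s => rfl }
    rw [Fintype.card_congr E, card_subsets_with_mem r m (by omega) i]
  have hArm : A * r = m * T := contain_mul r m (by omega) ⟨0, by omega⟩
  have hTpos : 0 < T := Nat.choose_pos hmr.le
  have hApos : 0 < A := by
    rcases Nat.eq_zero_or_pos A with h | h
    · rw [h, zero_mul] at hArm
      have : 0 < m * T := Nat.mul_pos (by omega) hTpos
      omega
    · exact h
  have hAT : A ≤ T := by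
    have h1 : A * r ≤ T * r := by
      rw [hArm]
      exact Nat.mul_le_mul_right T (by omega) |>.trans_eq (mul_comm r T)
    exact Nat.le_of_mul_le_mul_right h1 (by omega)
  -- the bad set
  set Bad : Finset (Sym2 (Fin n) → {s : Finset (Fin r) // s.card = m}) :=
    Finset.univ.filter (fun χ => ∃ i : Fin r, HasMonoClique (fun e => (χ e).1) i k) with hBad
  have hsubset : Bad ⊆ Finset.univ.biUnion (fun i : Fin r =>
      ((Finset.univ : Finset (Fin n)).powersetCard k).biUnion (fun W =>
      Finset.univ.filter (fun χ : Sym2 (Fin n) → {s : Finset (Fin r) // s.card = m} =>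
        ∀ e ∈ W.sym2.filter (fun e => ¬ e.IsDiag), i ∈ (χ e).1))) := by
    intro χ hχ
    rw [hBad, Finset.mem_filter] at hχ
    obtain ⟨-, i, W, hWc, hmono⟩ := hχ
    rw [Finset.mem_biUnion]
    refine ⟨i, Finset.mem_univ i, ?_⟩
    rw [Finset.mem_biUnion]
    refine ⟨W, Finset.mem_powersetCard.2 ⟨Finset.subset_univ W, hWc⟩, ?_⟩
    rw [Finset.mem_filter]
    refine ⟨Finset.mem_univ χ, ?_⟩
    intro e he
    rw [Finset.mem_filter] at he
    obtain ⟨he1, he2⟩ := he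
    induction e using Sym2.ind with
    | _ a b =>
      rw [Finset.mk_mem_sym2_iff] at he1
      rw [Sym2.mk_isDiag_iff] at he2
      exact hmono a he1.1 b he1.2 he2
  have hinner : ∀ i : Fin r, ∀ W ∈ ((Finset.univ : Finset (Fin n)).powersetCard k),
      (Finset.univ.filter (fun χ : Sym2 (Fin n) → {s : Finset (Fin r) // s.card = m} =>
        ∀ e ∈ W.sym2.filter (fun e => ¬ e.IsDiag), i ∈ (χ e).1)).card
      ≤ A ^ c * T ^ (N - c) := by
    intro i W hW
    rw [Finset.mem_powersetCard] at hW
    set S := W.sym2.filter (fun e => ¬ e.IsDiag) with hS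
    have hcS : c ≤ S.card := by
      have := card_sym2_nondiag_ge W
      rw [hW.2] at this
      exact this
    have hSN : S.card ≤ N := le_trans (Finset.card_le_univ S) (le_of_eq (Finset.card_univ))
    have hcount : (Finset.univ.filter (fun χ : Sym2 (Fin n) → {s : Finset (Fin r) // s.card = m} =>
        ∀ e ∈ S, i ∈ (χ e).1)).card
        = (Fintype.card {s : {s : Finset (Fin r) // s.card = m} // i ∈ s.1}) ^ S.card * (Fintype.card {s : Finset (Fin r) // s.card = m}) ^ (Sᶜ.card) := by
      rw [← Fintype.card_subtype]
      exact card_constrained S (fun s : {s : Finset (Fin r) // s.card = m} => i ∈ s.1)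
    rw [hcount, hAcard i, hTcard, Finset.card_compl]
    have hsplit : S.card - c + (N - S.card) = N - c := nat_sub_add_sub _ _ _ hcS hSN
    calc A ^ S.card * T ^ (N - S.card)
        = A ^ c * (A ^ (S.card - c) * T ^ (N - S.card)) := by
          rw [← mul_assoc, ← pow_add, Nat.add_sub_cancel' hcS]
      _ ≤ A ^ c * (T ^ (S.card - c) * T ^ (N - S.card)) := by
          exact Nat.mul_le_mul_left _ (Nat.mul_le_mul_right _ (Nat.pow_le_pow_left hAT _))
      _ = A ^ c * T ^ (N - c) := by
          rw [← pow_add, hsplit]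
  have hBadcard : Bad.card ≤ r * (Nat.choose n k * (A ^ c * T ^ (N - c))) := by
    calc Bad.card
        ≤ (Finset.univ.biUnion (fun i : Fin r =>
          ((Finset.univ : Finset (Fin n)).powersetCard k).biUnion (fun W =>
          Finset.univ.filter (fun χ : Sym2 (Fin n) → {s : Finset (Fin r) // s.card = m} =>
            ∀ e ∈ W.sym2.filter (fun e => ¬ e.IsDiag), i ∈ (χ e).1)))).card :=
          Finset.card_le_card hsubset
      _ ≤ ∑ i : Fin r, (((Finset.univ : Finset (Fin n)).powersetCard k).biUnion (fun W =>
          Finset.univ.filter (fun χ : Sym2 (Fin n) → {s : Finset (Fin r) // s.card = m} =>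
            ∀ e ∈ W.sym2.filter (fun e => ¬ e.IsDiag), i ∈ (χ e).1))).card :=
          Finset.card_biUnion_le
      _ ≤ ∑ _i : Fin r, ∑ _W ∈ ((Finset.univ : Finset (Fin n)).powersetCard k),
            (A ^ c * T ^ (N - c)) := by
          refine Finset.sum_le_sum (fun i _ => ?_)
          exact le_trans Finset.card_biUnion_le (Finset.sum_le_sum (hinner i))
      _ = r * (Nat.choose n k * (A ^ c * T ^ (N - c))) := by
          rw [Finset.sum_const, Finset.sum_const, Finset.card_univ, Fintype.card_fin,
            Finset.card_powersetCard, Finset.card_univ, Fintype.card_fin, smul_eq_mul,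
            smul_eq_mul]
  -- numeric inequality
  have hcN : c ≤ N := by
    obtain ⟨W₀, -, hW₀⟩ := Finset.exists_subset_card_eq (s := (Finset.univ : Finset (Fin n))) (n := k)
      (by simpa using hnk)
    have h1 := card_sym2_nondiag_ge W₀
    rw [hW₀] at h1
    exact le_trans h1 (le_trans (Finset.card_le_univ _) (le_of_eq Finset.card_univ))
  have key := key_ineq m k r n hm hmr hk hn hlt
  have hnum : r * (Nat.choose n k * (A ^ c * T ^ (N - c))) < T ^ N := by
    have hrR : (0:ℝ) < r := by exact_mod_cast (by omega : 0 < r)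
    rw [← Nat.cast_lt (α := ℝ)]
    push_cast
    have hAR : (A:ℝ) = (m:ℝ)/r * T := by
      have : (A:ℝ) * r = m * T := by exact_mod_cast hArm
      field_simp
      linarith
    have hTN : (T:ℝ) ^ N = (T:ℝ) ^ c * (T:ℝ) ^ (N - c) := by
      rw [← pow_add]
      congr 1
      omega
    rw [hTN, hAR, mul_pow]
    have hTc : (0:ℝ) < (T:ℝ) ^ c := by positivity
    have hTNc : (0:ℝ) < (T:ℝ) ^ (N - c) := by positivity
    calc (r:ℝ) * ((Nat.choose n k : ℝ) * (((m:ℝ)/r) ^ c * (T:ℝ) ^ c * (T:ℝ) ^ (N - c)))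
        = ((r:ℝ) * (Nat.choose n k) * ((m:ℝ)/r) ^ c) * ((T:ℝ) ^ c * (T:ℝ) ^ (N - c)) := by
          ring
      _ < 1 * ((T:ℝ) ^ c * (T:ℝ) ^ (N - c)) := by
          apply mul_lt_mul_of_pos_right key
          positivity
      _ = (T:ℝ) ^ c * (T:ℝ) ^ (N - c) := by ring
  have hlt2 : Bad.card < (Finset.univ : Finset (Sym2 (Fin n) → {s : Finset (Fin r) // s.card = m})).card := by
    rw [Finset.card_univ, hΩcard]
    exact lt_of_le_of_lt hBadcard hnum
  have hns : ¬ (Finset.univ : Finset (Sym2 (Fin n) → {s : Finset (Fin r) // s.card = m})) ⊆ Bad := by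
    intro h
    exact absurd hlt2 (not_lt.2 (Finset.card_le_card h))
  rw [Finset.not_subset] at hns
  obtain ⟨χ, -, hχ⟩ := hns
  refine ⟨fun e => (χ e).1, fun e => (χ e).2, ?_⟩
  intro i hi
  exact hχ (Finset.mem_filter.2 ⟨Finset.mem_univ χ, ⟨i, hi⟩⟩)
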